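/- arXiv:2106.04082 — 5 statements merged into one kernel-verified Lean document; each statement's English description precedes it below -/
import Mathlib

section
/- Shifted self-similarity of the binomial distribution: for 0 < a₁, a₂ < 1 and 0 ≤ y ≤ x ≤ N, Σ_{z=y}^{x} π_K(x−z, N−z, a₂)·π_K(z−y, N−y, a₁) = π_K(x−y, N−y, 1−(1−a₁)(1−a₂)). -/
noncomputable def piK (x N : ℕ) (p : ℝ) : ℝ := (Nat.choose N x : ℝ) * p ^ x * (1 - p) ^ (N - x)

theorem stmt_9 (a₁ a₂ : ℝ) (ha₁ : 0 < a₁) (ha₁' : a₁ < 1) (ha₂ : 0 < a₂) (ha₂' : a₂ < 1)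
    (N x y : ℕ) (hyx : y ≤ x) (hxN : x ≤ N) :
    ∑ z ∈ Finset.Icc y x, piK (x - z) (N - z) a₂ * piK (z - y) (N - y) a₁
      = piK (x - y) (N - y) (1 - (1 - a₁) * (1 - a₂)) := by
  set n := N - y with hn
  set k := x - y with hk
  have hkn : k ≤ n := by omega
  -- reindex to range (k+1)
  have hre : ∑ z ∈ Finset.Icc y x, piK (x - z) (N - z) a₂ * piK (z - y) (N - y) a₁
      = ∑ i ∈ Finset.range (k + 1), piK (k - i) (n - i) a₂ * piK i n a₁ := by
    refine Finset.sum_nbij' (fun z => z - y) (fun i => y + i) ?_ ?_ ?_ ?_ ?_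
    · intro z hz; simp only [Finset.mem_Icc] at hz; simp only [Finset.mem_range]; omega
    · intro i hi; simp only [Finset.mem_range] at hi; simp only [Finset.mem_Icc]; omega
    · intro z hz; simp only [Finset.mem_Icc] at hz; omega
    · intro i hi; simp only [Finset.mem_range] at hi; omega
    · intro z hz; simp only [Finset.mem_Icc] at hz
      have h1 : x - z = k - (z - y) := by omega
      have h2 : N - z = n - (z - y) := by omega
      rw [h1, h2]
  rw [hre]
  unfold piK
  have key : ∀ i ∈ Finset.range (k + 1),
      (Nat.choose (n - i) (k - i) : ℝ) * a₂ ^ (k - i) * (1 - a₂) ^ (n - i - (k - i)) *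
        ((Nat.choose n i : ℝ) * a₁ ^ i * (1 - a₁) ^ (n - i))
      = (Nat.choose n k : ℝ) * ((1 - a₂) * (1 - a₁)) ^ (n - k) *
          ((Nat.choose k i : ℝ) * a₁ ^ i * (a₂ * (1 - a₁)) ^ (k - i)) := by
    intro i hi
    simp only [Finset.mem_range] at hi
    have hik : i ≤ k := by omega
    have h1 : n - i - (k - i) = n - k := by omega
    have h2 : (1 - a₁) ^ (n - i) = (1 - a₁) ^ (n - k) * (1 - a₁) ^ (k - i) := by
      rw [← pow_add]; congr 1; omega
    have h3 : (Nat.choose n i : ℝ) * (Nat.choose (n - i) (k - i) : ℝ)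
        = (Nat.choose n k : ℝ) * (Nat.choose k i : ℝ) := by
      rw [← Nat.cast_mul, ← Nat.cast_mul, ← Nat.choose_mul hik]
    rw [h1, h2]
    calc (Nat.choose (n - i) (k - i) : ℝ) * a₂ ^ (k - i) * (1 - a₂) ^ (n - k) *
          ((Nat.choose n i : ℝ) * a₁ ^ i * ((1 - a₁) ^ (n - k) * (1 - a₁) ^ (k - i)))
        = ((Nat.choose n i : ℝ) * (Nat.choose (n - i) (k - i) : ℝ)) *
            (a₂ ^ (k - i) * (1 - a₂) ^ (n - k) * (a₁ ^ i * ((1 - a₁) ^ (n - k) * (1 - a₁) ^ (k - i)))) := by ring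
      _ = ((Nat.choose n k : ℝ) * (Nat.choose k i : ℝ)) *
            (a₂ ^ (k - i) * (1 - a₂) ^ (n - k) * (a₁ ^ i * ((1 - a₁) ^ (n - k) * (1 - a₁) ^ (k - i)))) := by rw [h3]
      _ = (Nat.choose n k : ℝ) * ((1 - a₂) * (1 - a₁)) ^ (n - k) *
            ((Nat.choose k i : ℝ) * a₁ ^ i * (a₂ * (1 - a₁)) ^ (k - i)) := by
          rw [mul_pow, mul_pow]; ring
  rw [Finset.sum_congr rfl key, ← Finset.mul_sum]
  have hbin : ∑ i ∈ Finset.range (k + 1),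
      (Nat.choose k i : ℝ) * a₁ ^ i * (a₂ * (1 - a₁)) ^ (k - i)
      = (a₁ + a₂ * (1 - a₁)) ^ k := by
    rw [add_pow]
    apply Finset.sum_congr rfl
    intro i hi; ring
  rw [hbin]
  have h4 : ((1 : ℝ) - (1 - (1 - a₁) * (1 - a₂))) ^ (n - k)
      = (1 - a₂) ^ (n - k) * (1 - a₁) ^ (n - k) := by
    rw [show (1 : ℝ) - (1 - (1 - a₁) * (1 - a₂)) = (1 - a₂) * (1 - a₁) by ring, mul_pow]
  have h5 : (1 - (1 - a₁) * (1 - a₂)) = a₁ + a₂ * (1 - a₁) := by ring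
  rw [h4, h5, mul_pow]
  ring
end

section
/- Hahn nested convolution identity: for a₁, b₁, b₂ > 0 and 0 ≤ x ≤ y, Σ_{z=x}^{y} π_H(x, z, a₁, b₁)·π_H(z, y, a₁+b₁, b₂) = π_H(x, y, a₁, b₁+b₂). -/
noncomputable def risingFactorial (a : ℝ) (k : ℕ) : ℝ := ∏ j ∈ Finset.range k, (a + j)

noncomputable def piH (x N : ℕ) (a b : ℝ) : ℝ :=
  (Nat.choose N x : ℝ) * risingFactorial a x * risingFactorial b (N - x)
    / risingFactorial (a + b) N

lemma rf_succ (a : ℝ) (k : ℕ) :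
    risingFactorial a (k + 1) = risingFactorial a k * (a + k) := by
  simp [risingFactorial, Finset.prod_range_succ]

lemma rf_pos {a : ℝ} (ha : 0 < a) (k : ℕ) : 0 < risingFactorial a k := by
  apply Finset.prod_pos
  intro j _
  positivity

lemma vand (a b : ℝ) : ∀ n : ℕ,
    ∑ k ∈ Finset.range (n + 1),
      (n.choose k : ℝ) * risingFactorial a k * risingFactorial b (n - k)
      = risingFactorial (a + b) n := by
  intro n
  induction n with
  | zero => simp [risingFactorial]
  | succ n ih =>
    rw [Finset.sum_range_succ' _ (n + 1)]
    simp only [Nat.choose_succ_succ, Nat.cast_add]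
    rw [Finset.sum_congr rfl (fun k _ => by ring :
      ∀ k ∈ Finset.range (n + 1),
        ((n.choose k : ℝ) + n.choose (k + 1)) * risingFactorial a (k + 1) *
          risingFactorial b (n + 1 - (k + 1))
        = (n.choose k : ℝ) * risingFactorial a (k + 1) * risingFactorial b (n + 1 - (k + 1))
          + (n.choose (k + 1) : ℝ) * risingFactorial a (k + 1) *
            risingFactorial b (n + 1 - (k + 1))), Finset.sum_add_distrib]
    have h1 : ∑ k ∈ Finset.range (n + 1),
        (n.choose k : ℝ) * risingFactorial a (k + 1) * risingFactorial b (n + 1 - (k + 1))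
        = ∑ k ∈ Finset.range (n + 1),
          (n.choose k : ℝ) * risingFactorial a k * risingFactorial b (n - k) * (a + k) := by
      apply Finset.sum_congr rfl
      intro k hk
      rw [rf_succ, Nat.succ_sub_succ]
      ring
    have h2 : (↑(n.choose 0) : ℝ) * risingFactorial a 0 * risingFactorial b (n + 1 - 0)
        + ∑ k ∈ Finset.range (n + 1),
          (n.choose (k + 1) : ℝ) * risingFactorial a (k + 1) * risingFactorial b (n + 1 - (k + 1))
        = ∑ k ∈ Finset.range (n + 1),
          (n.choose k : ℝ) * risingFactorial a k * risingFactorial b (n - k) * (b + (n - k : ℕ)) := by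
      rw [add_comm]
      rw [← Finset.sum_range_succ' (fun k =>
        (n.choose k : ℝ) * risingFactorial a k * risingFactorial b (n + 1 - k)) (n + 1)]
      rw [Finset.sum_range_succ]
      simp only [Nat.choose_succ_self, Nat.cast_zero, zero_mul, add_zero]
      apply Finset.sum_congr rfl
      intro k hk
      rw [Finset.mem_range] at hk
      have : n + 1 - k = (n - k) + 1 := by omega
      rw [this, rf_succ]
      ring
    have hf0 : ((n + 1).choose 0 : ℝ) = (n.choose 0 : ℝ) := by simp
    rw [hf0, add_assoc, add_comm (∑ x ∈ Finset.range (n + 1),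
      (n.choose (x + 1) : ℝ) * risingFactorial a (x + 1) * risingFactorial b (n + 1 - (x + 1)))]
    rw [h1, h2, ← Finset.sum_add_distrib, rf_succ, ← ih, Finset.sum_mul]
    apply Finset.sum_congr rfl
    intro k hk
    rw [Finset.mem_range] at hk
    have hkn : k ≤ n := Nat.lt_succ_iff.mp hk
    have hc : ((n - k : ℕ) : ℝ) = (n : ℝ) - k := by
      rw [Nat.cast_sub hkn]
    rw [hc]
    ring

theorem stmt_11 (a₁ b₁ b₂ : ℝ) (ha₁ : 0 < a₁) (hb₁ : 0 < b₁) (hb₂ : 0 < b₂)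
    (x y : ℕ) (hxy : x ≤ y) :
    ∑ z ∈ Finset.Icc x y, piH x z a₁ b₁ * piH z y (a₁ + b₁) b₂
      = piH x y a₁ (b₁ + b₂) := by
  have hden : ∀ (c : ℝ), 0 < c → ∀ n : ℕ, risingFactorial c n ≠ 0 :=
    fun c hc n => (rf_pos hc n).ne'
  have key : ∀ z ∈ Finset.Icc x y,
      piH x z a₁ b₁ * piH z y (a₁ + b₁) b₂
      = (y.choose x : ℝ) * risingFactorial a₁ x
          * ((((y - x).choose (z - x) : ℝ) * risingFactorial b₁ (z - x)
              * risingFactorial b₂ ((y - x) - (z - x))))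
          / risingFactorial (a₁ + b₁ + b₂) y := by
    intro z hz
    rw [Finset.mem_Icc] at hz
    obtain ⟨hxz, hzy⟩ := hz
    unfold piH
    have hcc : (z.choose x : ℝ) * (y.choose z : ℝ)
        = (y.choose x : ℝ) * ((y - x).choose (z - x) : ℝ) := by
      rw [mul_comm]
      exact_mod_cast congrArg (Nat.cast : ℕ → ℝ) (Nat.choose_mul (n := y) hxz)
    have hsub : y - z = (y - x) - (z - x) := by omega
    have h1 : risingFactorial (a₁ + b₁) z ≠ 0 := hden _ (by linarith) z
    have h2 : risingFactorial (a₁ + b₁ + b₂) y ≠ 0 := hden _ (by linarith) y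
    field_simp
    rw [hsub]
    linear_combination hcc * (risingFactorial a₁ x * risingFactorial b₁ (z - x)
      * risingFactorial b₂ ((y - x) - (z - x)))
  rw [Finset.sum_congr rfl key]
  rw [← Finset.sum_div, ← Finset.mul_sum]
  have hre : ∑ z ∈ Finset.Icc x y,
      (((y - x).choose (z - x) : ℝ) * risingFactorial b₁ (z - x)
        * risingFactorial b₂ ((y - x) - (z - x)))
      = ∑ k ∈ Finset.range ((y - x) + 1),
        (((y - x).choose k : ℝ) * risingFactorial b₁ k * risingFactorial b₂ ((y - x) - k)) := by
    apply Finset.sum_nbij' (fun z => z - x) (fun k => k + x)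
    · intro z hz; rw [Finset.mem_Icc] at hz; rw [Finset.mem_range]; omega
    · intro k hk; rw [Finset.mem_range] at hk; rw [Finset.mem_Icc]; omega
    · intro z hz; rw [Finset.mem_Icc] at hz; omega
    · intro k hk; omega
    · intro z hz; rfl
  rw [hre, vand]
  unfold piH
  rw [← add_assoc]
end

section
/- Parameter-interchanged Hahn convolution: for a₁, b₁, b₂ > 0 and 0 ≤ x ≤ y, Σ_{z=x}^{y} π_H(x, z, a₁+b₁, b₂)·π_H(z, y, a₁, b₁) = π_H(x, y, a₁, b₁+b₂). -/
namespace HahnAux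

lemma rf_zero (a : ℝ) : risingFactorial a 0 = 1 := by simp [risingFactorial]

lemma rf_one (a : ℝ) : risingFactorial a 1 = a := by simp [risingFactorial]

lemma rf_succ (a : ℝ) (k : ℕ) :
    risingFactorial a (k + 1) = risingFactorial a k * (a + k) :=
  Finset.prod_range_succ _ _

lemma rf_add (a : ℝ) (m k : ℕ) :
    risingFactorial a (m + k) = risingFactorial a m * risingFactorial (a + m) k := by
  unfold risingFactorial
  rw [Finset.prod_range_add]
  congr 1
  refine Finset.prod_congr rfl fun j _ => ?_
  push_cast
  ring

lemma rf_arg {a b : ℝ} (h : a = b) (k : ℕ) :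
    risingFactorial a k = risingFactorial b k := by rw [h]

lemma rf_pos {a : ℝ} (ha : 0 < a) (k : ℕ) : 0 < risingFactorial a k := by
  unfold risingFactorial
  exact Finset.prod_pos fun j _ => by positivity

lemma rf_ne {a : ℝ} (ha : 0 < a) (k : ℕ) : risingFactorial a k ≠ 0 := (rf_pos ha k).ne'

/-- Summand of the Saalschütz-type sum. -/
noncomputable def Tm (a p q : ℝ) (n k : ℕ) : ℝ :=
  (Nat.choose n k : ℝ) * risingFactorial a k * risingFactorial q k *
    risingFactorial p (n - k) * risingFactorial (a + p + q + k) (n - k)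

/-- WZ-style certificate. -/
noncomputable def Gm (a p q : ℝ) (n k : ℕ) : ℝ :=
  if k ≤ n then
    (k : ℝ) * ((k : ℝ) + (a + p + q) - 1) * ((k : ℝ) - p - n) / ((n : ℝ) + 1 - k)
      * Tm a p q n k
  else -(risingFactorial a k * risingFactorial q k)

lemma Etel (a p q : ℝ) (n k : ℕ) (hk : k ≤ n) :
    Tm a p q (n + 1) k
      = (p + q + n) * (a + p + n) * Tm a p q n k
        + (Gm a p q n (k + 1) - Gm a p q n k) := by
  rcases Nat.lt_or_ge k n with h | h
  · -- k < n
    obtain ⟨m, hm⟩ : ∃ m, n = k + 1 + m := ⟨n - (k + 1), by omega⟩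
    have e1 : n - k = m + 1 := by omega
    have e2 : n + 1 - k = m + 2 := by omega
    have e3 : n - (k + 1) = m := by omega
    rw [Tm, Tm, Gm, Gm, if_pos (by omega : k + 1 ≤ n), if_pos hk, Tm, Tm, e1, e2, e3]
    have hc1 : (a + p + q + (k : ℝ)) + 1 = a + p + q + ((k + 1 : ℕ) : ℝ) := by
      push_cast; ring
    -- expand rising factorials
    rw [rf_succ p (m + 1), rf_succ p m,
      show m + 1 + 1 = m + 2 from rfl]
    have hz2 : risingFactorial (a + p + q + (k : ℝ)) (m + 2)
        = (a + p + q + k) * (risingFactorial (a + p + q + ((k + 1 : ℕ) : ℝ)) m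
            * (a + p + q + (k : ℝ) + 1 + m)) := by
      rw [show m + 2 = 1 + (m + 1) from by ring, rf_add, rf_one, rf_succ]
      rw [rf_arg (show a + p + q + (k : ℝ) + ((1:ℕ) : ℝ) = a + p + q + ((k + 1 : ℕ) : ℝ) from by
        push_cast; ring)]
      push_cast; ring
    have hz1 : risingFactorial (a + p + q + (k : ℝ)) (m + 1)
        = (a + p + q + k) * risingFactorial (a + p + q + ((k + 1 : ℕ) : ℝ)) m := by
      rw [show m + 1 = 1 + m from by ring, rf_add, rf_one]
      rw [rf_arg (show a + p + q + (k : ℝ) + ((1:ℕ) : ℝ) = a + p + q + ((k + 1 : ℕ) : ℝ) from by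
        push_cast; ring)]
    rw [hz2, hz1, rf_succ a k, rf_succ q k]
    -- binomial relations
    have hd1 : ((n : ℝ) + 1 - (k : ℝ)) = (m : ℝ) + 2 := by
      subst hm; push_cast; ring
    have hd2 : ((n : ℝ) + 1 - ((k + 1 : ℕ) : ℝ)) = (m : ℝ) + 1 := by
      subst hm; push_cast; ring
    rw [hd1, hd2]
    have hm2 : ((m : ℝ) + 2) ≠ 0 := by positivity
    have hk1 : ((k : ℝ) + 1) ≠ 0 := by positivity
    have hB2 : ((Nat.choose (n + 1) k : ℝ))
        = (Nat.choose n k : ℝ) * ((n : ℝ) + 1) / ((m : ℝ) + 2) := by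
      have h0 := Nat.choose_mul_succ_eq n k
      have h0' : (Nat.choose n k : ℝ) * ((n : ℝ) + 1)
          = (Nat.choose (n + 1) k : ℝ) * ((m : ℝ) + 2) := by
        have e : n + 1 - k = m + 2 := by omega
        rw [e] at h0
        exact_mod_cast congrArg (Nat.cast : ℕ → ℝ) h0
      field_simp
      linarith
    have hB3 : ((Nat.choose n (k + 1) : ℝ))
        = (Nat.choose n k : ℝ) * ((m : ℝ) + 1) / ((k : ℝ) + 1) := by
      have h0 := Nat.choose_succ_right_eq n k
      have h0' : (Nat.choose n (k + 1) : ℝ) * ((k : ℝ) + 1)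
          = (Nat.choose n k : ℝ) * ((m : ℝ) + 1) := by
        rw [e1] at h0
        exact_mod_cast congrArg (Nat.cast : ℕ → ℝ) h0
      field_simp
      linarith
    rw [hB2, hB3]
    have hn : (n : ℝ) = (k : ℝ) + 1 + (m : ℝ) := by subst hm; push_cast; ring
    rw [hn]
    push_cast
    field_simp
    ring
  · -- k = n
    have hkn : k = n := le_antisymm hk h
    subst hkn
    rw [Tm, Tm, Gm, Gm, if_neg (by omega : ¬ k + 1 ≤ k), if_pos le_rfl, Tm,
      Nat.sub_self, Nat.add_sub_cancel_left]
    rw [rf_zero, rf_zero, rf_one, rf_one, rf_succ a k, rf_succ q k,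
      Nat.choose_self, Nat.choose_succ_self_right]
    have hd : ((k : ℝ) + 1 - (k : ℝ)) = 1 := by ring
    rw [hd]
    push_cast
    ring

lemma key (a p q : ℝ) (n : ℕ) :
    ∑ k ∈ Finset.range (n + 1), Tm a p q n k
      = risingFactorial (p + q) n * risingFactorial (a + p) n := by
  induction n with
  | zero => simp [Tm, rf_zero]
  | succ n ih =>
    have step : ∑ k ∈ Finset.range (n + 1), Tm a p q (n + 1) k
        = (p + q + n) * (a + p + n) * ∑ k ∈ Finset.range (n + 1), Tm a p q n k
          + (Gm a p q n (n + 1) - Gm a p q n 0) := by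
      rw [← Finset.sum_range_sub (Gm a p q n) (n + 1), Finset.mul_sum,
        ← Finset.sum_add_distrib]
      refine Finset.sum_congr rfl fun k hk => ?_
      exact Etel a p q n k (by simpa [Nat.lt_succ_iff] using Finset.mem_range.mp hk)
    have hG0 : Gm a p q n 0 = 0 := by
      simp [Gm]
    have hGn : Gm a p q n (n + 1) = -(risingFactorial a (n + 1) * risingFactorial q (n + 1)) := by
      rw [Gm, if_neg (by omega)]
    have hT : Tm a p q (n + 1) (n + 1)
        = risingFactorial a (n + 1) * risingFactorial q (n + 1) := by
      rw [Tm, Nat.sub_self, Nat.choose_self, rf_zero, rf_zero]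
      push_cast; ring
    rw [Finset.sum_range_succ, step, hG0, hGn, hT, ih, rf_succ (p + q) n, rf_succ (a + p) n]
    ring

lemma sum_Icc_shift (f : ℕ → ℝ) (x n : ℕ) :
    ∑ z ∈ Finset.Icc x (x + n), f z = ∑ k ∈ Finset.range (n + 1), f (x + k) := by
  induction n with
  | zero => simp
  | succ n ih =>
    rw [show x + (n + 1) = (x + n) + 1 from rfl,
      Finset.sum_Icc_succ_top (by omega : x ≤ x + n + 1), ih,
      Finset.sum_range_succ _ (n + 1)]
    rfl

end HahnAux

open HahnAux in
theorem stmt_12 (a₁ b₁ b₂ : ℝ) (ha₁ : 0 < a₁) (hb₁ : 0 < b₁) (hb₂ : 0 < b₂)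
    (x y : ℕ) (hxy : x ≤ y) :
    ∑ z ∈ Finset.Icc x y, piH x z (a₁ + b₁) b₂ * piH z y a₁ b₁
      = piH x y a₁ (b₁ + b₂) := by
  obtain ⟨n, rfl⟩ : ∃ n, y = x + n := ⟨y - x, by omega⟩
  rw [sum_Icc_shift]
  have hxr : (0 : ℝ) ≤ (x : ℝ) := Nat.cast_nonneg x
  have hA : (0 : ℝ) < a₁ + b₁ + b₂ := by linarith
  have hA' : (0 : ℝ) < a₁ + b₁ := by linarith
  have hAx : (0 : ℝ) < a₁ + b₁ + b₂ + (x : ℝ) := by linarith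
  have hA'x : (0 : ℝ) < a₁ + b₁ + (x : ℝ) := by linarith
  set Cst : ℝ := (Nat.choose (x + n) x : ℝ) * risingFactorial a₁ x
      / (risingFactorial (a₁ + b₁ + b₂) x * risingFactorial (a₁ + b₁ + b₂ + x) n
          * risingFactorial (a₁ + b₁ + x) n) with hCst
  have term : ∀ k ∈ Finset.range (n + 1),
      piH x (x + k) (a₁ + b₁) b₂ * piH (x + k) (x + n) a₁ b₁
        = Cst * Tm (a₁ + (x : ℝ)) b₁ b₂ n k := by
    intro k hk
    have hkn : k ≤ n := by simpa [Nat.lt_succ_iff] using Finset.mem_range.mp hk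
    rw [piH, piH, Tm, Nat.add_sub_cancel_left,
      show x + n - (x + k) = n - k from by omega]
    have h1 : risingFactorial (a₁ + b₁ + b₂) (x + k)
        = risingFactorial (a₁ + b₁ + b₂) x * risingFactorial (a₁ + b₁ + b₂ + x) k :=
      rf_add _ _ _
    have h2 : risingFactorial a₁ (x + k)
        = risingFactorial a₁ x * risingFactorial (a₁ + x) k := rf_add _ _ _
    have h3 : risingFactorial (a₁ + b₁) (x + n)
        = risingFactorial (a₁ + b₁) x * risingFactorial (a₁ + b₁ + x) n := rf_add _ _ _
    have h4 : risingFactorial (a₁ + b₁ + b₂ + (x : ℝ)) n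
        = risingFactorial (a₁ + b₁ + b₂ + (x : ℝ)) k
          * risingFactorial (a₁ + (x : ℝ) + b₁ + b₂ + (k : ℝ)) (n - k) := by
      rw [show n = k + (n - k) from by omega, rf_add]
      rw [show k + (n - k) - k = n - k from by omega]
      congr 1
      exact rf_arg (by ring) _
    have hC : ((Nat.choose (x + n) (x + k) : ℝ))
        = (Nat.choose (x + n) x : ℝ) * (Nat.choose n k : ℝ) / (Nat.choose (x + k) x : ℝ) := by
      have h0 := Nat.choose_mul (n := x + n) (show x ≤ x + k from by omega)
      rw [Nat.add_sub_cancel_left, Nat.add_sub_cancel_left] at h0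
      have h0' : ((Nat.choose (x + n) (x + k) : ℝ)) * (Nat.choose (x + k) x : ℝ)
          = (Nat.choose (x + n) x : ℝ) * (Nat.choose n k : ℝ) := by exact_mod_cast h0
      have hne : ((Nat.choose (x + k) x : ℝ)) ≠ 0 := by
        exact_mod_cast (Nat.choose_pos (show x ≤ x + k from by omega)).ne'
      field_simp
      linarith
    rw [h1, h2, h3, hC, hCst]
    have e4 : risingFactorial (a₁ + (x : ℝ)) k = risingFactorial (a₁ + x) k := rfl
    have hne1 := rf_ne hA x
    have hne2 := rf_ne hAx k
    have hne3 := rf_ne hA' x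
    have hne4 := rf_ne hA'x n
    have hne5 := rf_ne hAx n
    have hneC : ((Nat.choose (x + k) x : ℝ)) ≠ 0 := by
      exact_mod_cast (Nat.choose_pos (show x ≤ x + k from by omega)).ne'
    have hkr : (0 : ℝ) ≤ (k : ℝ) := Nat.cast_nonneg k
    have hne6 : risingFactorial (a₁ + (x:ℝ) + b₁ + b₂ + (k:ℝ)) (n - k) ≠ 0 :=
      rf_ne (by linarith) _
    have hne7 : risingFactorial (a₁ + b₁ + (x:ℝ) + b₂) k ≠ 0 := rf_ne (by linarith) _
    have hne8 : risingFactorial (a₁ + b₁ + (x:ℝ) + b₂ + (k:ℝ)) (n - k) ≠ 0 :=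
      rf_ne (by linarith) _
    rw [h4]
    field_simp
  rw [Finset.sum_congr rfl term, ← Finset.mul_sum, key]
  rw [piH, Nat.add_sub_cancel_left]
  have h5 : risingFactorial (a₁ + (b₁ + b₂)) (x + n)
      = risingFactorial (a₁ + b₁ + b₂) x * risingFactorial (a₁ + b₁ + b₂ + x) n := by
    rw [rf_arg (show a₁ + (b₁ + b₂) = a₁ + b₁ + b₂ from by ring), rf_add]
  rw [h5, hCst]
  have h6 : risingFactorial (a₁ + (x : ℝ) + b₁) n = risingFactorial (a₁ + b₁ + (x : ℝ)) n :=
    rf_arg (by ring) _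
  rw [h6]
  have hne1 := rf_ne hA x
  have hne4 := rf_ne hA'x n
  have hne5 := rf_ne hAx n
  field_simp
end

section
/- The Pochhammer sum identity underlying the interchanged Hahn convolutions: for n, m ∈ ℤ_{≥0} and real a, b₁, b₂ (with nonzero denominators), Σ_{k=0}^{n} C(n,k) (b₁)_{n−k} (b₂)_k (a)_{m+k}/(a+b₁+b₂)_{m+k} = (a)_m (b₁+b₂)_n (a+b₁)_{m+n} / ((a+b₁+b₂)_{m+n} (a+b₁)_m). -/
lemma rf_zero (a : ℝ) : risingFactorial a 0 = 1 := rfl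

lemma rf_add (a : ℝ) (m k : ℕ) :
    risingFactorial a (m + k) = risingFactorial a m * risingFactorial (a + m) k := by
  unfold risingFactorial
  rw [Finset.prod_range_add]
  congr 1
  refine Finset.prod_congr rfl fun j _ => ?_
  push_cast
  ring

/-- Core Pfaff–Saalschütz-type identity. -/
lemma core (b₁ b₂ s : ℝ) (hb₁ : 0 < b₁) (hb₂ : 0 < b₂) (hs : 0 < s) (n : ℕ) :
    ∑ k ∈ Finset.range (n+1),
      (Nat.choose n k : ℝ) * risingFactorial b₁ (n - k) * risingFactorial b₂ k
        * risingFactorial s k / risingFactorial (s + b₁ + b₂) k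
      = risingFactorial (b₁ + b₂) n * risingFactorial (s + b₁) n
          / risingFactorial (s + b₁ + b₂) n := by
  induction n with
  | zero => simp [rf_zero]
  | succ n ih =>
    have hTpos : 0 < s + b₁ + b₂ := by positivity
    -- split the sum using Pascal's rule
    have hsplit :
        (∑ k ∈ Finset.range (n+1+1),
          (Nat.choose (n+1) k : ℝ) * risingFactorial b₁ (n+1 - k) * risingFactorial b₂ k
            * risingFactorial s k / risingFactorial (s + b₁ + b₂) k)
        = (∑ k ∈ Finset.range (n+1),
            (Nat.choose n k : ℝ) * (risingFactorial b₁ (n+1 - k) * (risingFactorial b₂ k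
              * risingFactorial s k / risingFactorial (s + b₁ + b₂) k)))
          + ∑ k ∈ Finset.range (n+1),
            (Nat.choose n k : ℝ) * (risingFactorial b₁ (n - k) * (risingFactorial b₂ (k+1)
              * risingFactorial s (k+1) / risingFactorial (s + b₁ + b₂) (k+1))) := by
      have h := Finset.sum_choose_succ_mul
        (f := fun i j => risingFactorial b₁ j *
          (risingFactorial b₂ i * risingFactorial s i / risingFactorial (s + b₁ + b₂) i)) n
      rw [show n + 1 + 1 = n + 2 from rfl]
      rw [← h]
      refine Finset.sum_congr rfl fun k _ => ?_
      ring
    rw [hsplit]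
    -- the telescoping certificate
    set ρ : ℝ := (b₁ + b₂ + n) * (s + b₁ + n) / (s + b₁ + b₂ + n) with hρ
    set V : ℕ → ℝ := fun j => (j : ℝ) * (Nat.choose n j : ℝ) *
      risingFactorial b₁ (n + 1 - j) * risingFactorial b₂ j * risingFactorial s j
      / (risingFactorial (s + b₁ + b₂) j * (s + b₁ + b₂ + n)) with hV
    have key : ∀ k ∈ Finset.range (n+1),
        (Nat.choose n k : ℝ) * (risingFactorial b₁ (n+1 - k) * (risingFactorial b₂ k
          * risingFactorial s k / risingFactorial (s + b₁ + b₂) k))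
        + (Nat.choose n k : ℝ) * (risingFactorial b₁ (n - k) * (risingFactorial b₂ (k+1)
          * risingFactorial s (k+1) / risingFactorial (s + b₁ + b₂) (k+1)))
        = ρ * ((Nat.choose n k : ℝ) * risingFactorial b₁ (n - k) * risingFactorial b₂ k
            * risingFactorial s k / risingFactorial (s + b₁ + b₂) k)
          + (V (k+1) - V k) := by
      intro k hk
      rw [Finset.mem_range] at hk
      have hkn : k ≤ n := Nat.lt_succ_iff.mp hk
      have h1 : n + 1 - k = (n - k) + 1 := by omega
      have h2 : n + 1 - (k + 1) = n - k := by omega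
      have hcast : ((n - k : ℕ) : ℝ) = (n : ℝ) - k := by
        rw [Nat.cast_sub hkn]
      have hch : (Nat.choose n (k+1) : ℝ) = (Nat.choose n k : ℝ) * ((n : ℝ) - k)
          / ((k : ℝ) + 1) := by
        rw [eq_div_iff (by positivity), ← hcast]
        exact_mod_cast Nat.choose_succ_right_eq n k
      simp only [hV, hρ, h1, h2, rf_succ, hch, Nat.cast_add, Nat.cast_one, hcast]
      have hTk : risingFactorial (s + b₁ + b₂) k ≠ 0 := ne_of_gt (rf_pos hTpos k)
      have hTk1 : s + b₁ + b₂ + (k : ℝ) ≠ 0 := by positivity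
      have hTn : s + b₁ + b₂ + (n : ℝ) ≠ 0 := by positivity
      have hk1 : (k : ℝ) + 1 ≠ 0 := by positivity
      field_simp
      ring
    rw [← Finset.sum_add_distrib, Finset.sum_congr rfl key, Finset.sum_add_distrib,
      Finset.sum_range_sub V, ← Finset.mul_sum]
    have hV0 : V 0 = 0 := by simp [hV]
    have hVn : V (n+1) = 0 := by simp [hV, Nat.choose_succ_self]
    rw [hV0, hVn]
    -- combine with induction hypothesis
    have hsum : (∑ k ∈ Finset.range (n+1),
        (Nat.choose n k : ℝ) * risingFactorial b₁ (n - k) * risingFactorial b₂ k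
          * risingFactorial s k / risingFactorial (s + b₁ + b₂) k)
        = risingFactorial (b₁ + b₂) n * risingFactorial (s + b₁) n
          / risingFactorial (s + b₁ + b₂) n := ih
    rw [hsum, hρ]
    rw [rf_succ (b₁ + b₂) n, rf_succ (s + b₁) n, rf_succ (s + b₁ + b₂) n]
    have h1 : risingFactorial (s + b₁ + b₂) n ≠ 0 := ne_of_gt (rf_pos hTpos n)
    have h2 : s + b₁ + b₂ + (n : ℝ) ≠ 0 := by positivity
    field_simp
    ring

theorem stmt_13 (a b₁ b₂ : ℝ) (ha : 0 < a) (hb₁ : 0 < b₁) (hb₂ : 0 < b₂)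
    (n m : ℕ) :
    ∑ k ∈ Finset.range (n+1),
      (Nat.choose n k : ℝ) * risingFactorial b₁ (n - k) * risingFactorial b₂ k
        * risingFactorial a (m + k) / risingFactorial (a + b₁ + b₂) (m + k)
      = risingFactorial a m * risingFactorial (b₁ + b₂) n
          * risingFactorial (a + b₁) (m + n)
        / (risingFactorial (a + b₁ + b₂) (m + n) * risingFactorial (a + b₁) m) := by
  have hTpos : 0 < a + b₁ + b₂ := by positivity
  have hspos : 0 < a + (m : ℝ) := by positivity
  have hrfam : 0 < risingFactorial a m := rf_pos ha m
  have hrfTm : 0 < risingFactorial (a + b₁ + b₂) m := rf_pos hTpos m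
  have hrfab : 0 < risingFactorial (a + b₁) m := rf_pos (by positivity) m
  have hcore := core b₁ b₂ (a + (m : ℝ)) hb₁ hb₂ hspos n
  have e1 : a + (m : ℝ) + b₁ + b₂ = a + b₁ + b₂ + (m : ℝ) := by ring
  have e2 : a + (m : ℝ) + b₁ = a + b₁ + (m : ℝ) := by ring
  rw [e1, e2] at hcore
  have hlhs : (∑ k ∈ Finset.range (n+1),
      (Nat.choose n k : ℝ) * risingFactorial b₁ (n - k) * risingFactorial b₂ k
        * risingFactorial a (m + k) / risingFactorial (a + b₁ + b₂) (m + k))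
      = (risingFactorial a m / risingFactorial (a + b₁ + b₂) m) *
        ∑ k ∈ Finset.range (n+1),
          (Nat.choose n k : ℝ) * risingFactorial b₁ (n - k) * risingFactorial b₂ k
            * risingFactorial (a + (m : ℝ)) k
            / risingFactorial (a + b₁ + b₂ + (m : ℝ)) k := by
    rw [Finset.mul_sum]
    refine Finset.sum_congr rfl fun k _ => ?_
    rw [rf_add a m k, rf_add (a + b₁ + b₂) m k]
    have h3 : risingFactorial (a + b₁ + b₂ + (m : ℝ)) k ≠ 0 :=
      ne_of_gt (rf_pos (by positivity) k)
    field_simp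
  rw [hlhs, hcore]
  rw [rf_add (a + b₁) m n, rf_add (a + b₁ + b₂) m n]
  have h4 : risingFactorial (a + b₁ + b₂ + (m : ℝ)) n ≠ 0 :=
    ne_of_gt (rf_pos (by positivity) n)
  field_simp
end

section
/- The q-binomial (q-Vandermonde) identity: for 0 < q < 1, n ∈ ℤ_{≥0}, and real a, b, Σ_{k=0}^{n} [n choose k]_q (a;q)_k (b;q)_{n−k} a^{n−k} = (ab;q)_n, where [n choose k]_q = (q;q)_n/((q;q)_k(q;q)_{n−k}) and (a;q)_k = ∏_{j=0}^{k−1}(1−aq^j). -/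
noncomputable def qPoch (a q : ℝ) (k : ℕ) : ℝ := ∏ j ∈ Finset.range k, (1 - a * q ^ j)

noncomputable def qBinom (n k : ℕ) (q : ℝ) : ℝ := qPoch q q n / (qPoch q q k * qPoch q q (n - k))

lemma qPoch_succ (a q : ℝ) (k : ℕ) : qPoch a q (k+1) = qPoch a q k * (1 - a * q ^ k) :=
  Finset.prod_range_succ _ _

@[simp] lemma qPoch_zero (a q : ℝ) : qPoch a q 0 = 1 := rfl

lemma qfac_factor_ne (q : ℝ) (hq : 0 < q) (hq1 : q < 1) (j : ℕ) : 1 - q * q ^ j ≠ 0 := by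
  have h1 : q ^ j ≤ 1 := pow_le_one₀ hq.le hq1.le
  nlinarith

lemma qPoch_q_pos (q : ℝ) (hq : 0 < q) (hq1 : q < 1) (k : ℕ) : 0 < qPoch q q k := by
  apply Finset.prod_pos
  intro j _
  have h1 : q ^ j ≤ 1 := pow_le_one₀ hq.le hq1.le
  nlinarith

lemma qPoch_q_ne (q : ℝ) (hq : 0 < q) (hq1 : q < 1) (k : ℕ) : qPoch q q k ≠ 0 :=
  (qPoch_q_pos q hq hq1 k).ne'

lemma qBinom_zero (q : ℝ) (hq : 0 < q) (hq1 : q < 1) (n : ℕ) : qBinom n 0 q = 1 := by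
  simp [qBinom, div_self (qPoch_q_ne q hq hq1 n)]

lemma qBinom_self (q : ℝ) (hq : 0 < q) (hq1 : q < 1) (n : ℕ) : qBinom n n q = 1 := by
  simp [qBinom, div_self (qPoch_q_ne q hq hq1 n)]

lemma qBinom_pascal (q : ℝ) (hq : 0 < q) (hq1 : q < 1) (k m : ℕ) :
    qBinom (k+m+2) (k+1) q
      = qBinom (k+m+1) k q + q^(k+1) * qBinom (k+m+1) (k+1) q := by
  have e1 : k+m+2 - (k+1) = m+1 := by omega
  have e2 : k+m+1 - k = m+1 := by omega
  have e3 : k+m+1 - (k+1) = m := by omega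
  unfold qBinom
  rw [e1, e2, e3]
  have hk := qPoch_q_ne q hq hq1 k
  have hm := qPoch_q_ne q hq hq1 m
  have hfk := qfac_factor_ne q hq hq1 k
  have hfm := qfac_factor_ne q hq hq1 m
  rw [show k+m+2 = (k+m+1)+1 by omega, qPoch_succ q q (k+m+1), qPoch_succ q q k,
    qPoch_succ q q m]
  field_simp
  ring

noncomputable def Tt (q a b : ℝ) (n k : ℕ) : ℝ :=
  qBinom n k q * qPoch a q k * qPoch b q (n - k) * a ^ (n - k)

noncomputable def Aa (q a b : ℝ) (n k : ℕ) : ℝ :=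
  qBinom n k q * qPoch a q (k+1) * qPoch b q (n-k) * a^(n-k)

noncomputable def Bb (q a b : ℝ) (n k : ℕ) : ℝ :=
  q^k * qBinom n k q * qPoch a q k * qPoch b q (n-k+1) * a^(n-k+1)

theorem stmt_14 (q : ℝ) (hq : 0 < q) (hq1 : q < 1) (n : ℕ) (a b : ℝ) :
    ∑ k ∈ Finset.range (n+1),
      qBinom n k q * qPoch a q k * qPoch b q (n - k) * a ^ (n - k)
      = qPoch (a * b) q n := by
  have keyT : ∀ n, (∑ k ∈ Finset.range (n+1), Tt q a b n k) = qPoch (a*b) q n := by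
    intro n
    induction n with
    | zero => simp [Tt, qBinom, qPoch]
    | succ n ih =>
      have hT0 : Tt q a b (n+1) 0 = Bb q a b n 0 := by
        simp [Tt, Bb, qBinom_zero q hq hq1]
      have hTn : Tt q a b (n+1) (n+1) = Aa q a b n n := by
        simp [Tt, Aa, qBinom_self q hq hq1]
      have hmid : ∀ k, k < n → Tt q a b (n+1) (k+1) = Aa q a b n k + Bb q a b n (k+1) := by
        intro k hk
        have e1 : n + 1 - (k+1) = n - k := by omega
        have e2 : n - (k+1) + 1 = n - k := by omega
        have hp := qBinom_pascal q hq hq1 k (n - k - 1)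
        have e4 : k + (n - k - 1) + 2 = n + 1 := by omega
        have e3 : k + (n - k - 1) + 1 = n := by omega
        rw [e4, e3] at hp
        simp only [Tt, Aa, Bb, e1, e2, hp]
        ring
      have hterm : ∀ k ∈ Finset.range (n+1),
          Tt q a b n k * (1 - a*b*q^n) = Aa q a b n k + Bb q a b n k := by
        intro k hk
        have hk' : k ≤ n := by have := Finset.mem_range.mp hk; omega
        have hpow : q ^ k * q ^ (n - k) = q ^ n := by rw [← pow_add]; congr 1; omega
        simp only [Tt, Aa, Bb]
        rw [qPoch_succ a q k, qPoch_succ b q (n-k), ← hpow]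
        ring
      calc ∑ k ∈ Finset.range (n+1+1), Tt q a b (n+1) k
          = (∑ k ∈ Finset.range n, Tt q a b (n+1) (k+1)) + Tt q a b (n+1) (n+1)
              + Tt q a b (n+1) 0 := by
            rw [Finset.sum_range_succ', Finset.sum_range_succ]
        _ = (∑ k ∈ Finset.range n, (Aa q a b n k + Bb q a b n (k+1))) + Aa q a b n n
              + Bb q a b n 0 := by
            rw [hT0, hTn]
            congr 2
            exact Finset.sum_congr rfl (fun k hk => hmid k (Finset.mem_range.mp hk))
        _ = (∑ k ∈ Finset.range (n+1), Aa q a b n k)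
              + (∑ k ∈ Finset.range (n+1), Bb q a b n k) := by
            rw [Finset.sum_add_distrib, Finset.sum_range_succ (fun k => Aa q a b n k) n,
              Finset.sum_range_succ' (fun k => Bb q a b n k) n]
            ring
        _ = ∑ k ∈ Finset.range (n+1), (Aa q a b n k + Bb q a b n k) :=
            (Finset.sum_add_distrib).symm
        _ = ∑ k ∈ Finset.range (n+1), Tt q a b n k * (1 - a*b*q^n) :=
            (Finset.sum_congr rfl hterm).symm
        _ = (∑ k ∈ Finset.range (n+1), Tt q a b n k) * (1 - a*b*q^n) := by
            rw [Finset.sum_mul]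
        _ = qPoch (a*b) q n * (1 - a*b*q^n) := by rw [ih]
        _ = qPoch (a*b) q (n+1) := (qPoch_succ _ _ _).symm
  simpa [Tt] using keyT n
end
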